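/- For a translation invariant polynomial P(z_1,...,z_N), the lowest power s of λ in the expansion of P after substituting z_i = z + λξ_i (i = 1,...,a, Σξ_i = 0) equals S_a, the minimal total degree of P in z_1,...,z_a. -/

import Mathlib

open MvPolynomial

noncomputable section

/-- Variable type for the fusion of the first `a` variables: `Sum.inl i` are the
auxiliary variables `ξ i`, `Sum.inr none` is the fused variable (center of mass)
`z`, and `Sum.inr (some j)` are the untouched variables `z j` for `a ≤ j`. -/
abbrev FVars (N : ℕ) := Fin N ⊕ Option (Fin N)

/-- The auxiliary variables `ξ i` for `i < a`, with the constraint `∑ ξ i = 0`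
imposed by eliminating the last one. -/
def fuseXi (N a : ℕ) (i : Fin N) : MvPolynomial (FVars N) ℂ :=
  if i.val + 1 < a then X (Sum.inl i)
  else -(∑ j ∈ Finset.univ.filter (fun j : Fin N => j.val + 1 < a), X (Sum.inl j))

/-- Fusion substitution `z i = z + λ * ξ i` for `i < a`, where `λ` is the
polynomial variable and `z = X (Sum.inr none)`. -/
def fuse (N a : ℕ) : MvPolynomial (Fin N) ℂ →ₐ[ℂ] Polynomial (MvPolynomial (FVars N) ℂ) :=
  MvPolynomial.aeval (fun i =>
    if i.val < a then Polynomial.C (X (Sum.inr none)) + Polynomial.X * Polynomial.C (fuseXi N a i)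
    else Polynomial.C (X (Sum.inr (some i))))

/-- `Qcoeff N a P m` is the coefficient `Q^m` of `λ^m` in the fusion expansion of `P`. -/
def Qcoeff (N a : ℕ) (P : MvPolynomial (Fin N) ℂ) (m : ℕ) : MvPolynomial (FVars N) ℂ :=
  (fuse N a P).coeff m

/-- `minDeg N P a` is `S_a`: the minimal total degree of `P` in `z 1, ..., z a`. -/
def minDeg (N : ℕ) (P : MvPolynomial (Fin N) ℂ) (a : ℕ) : ℕ :=
  sInf {d | ∃ mo ∈ P.support, d = ∑ i ∈ Finset.univ.filter (fun i : Fin N => i.val < a), mo i}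

/-- Translation invariance of a multivariate polynomial. -/
def TransInv (N : ℕ) (P : MvPolynomial (Fin N) ℂ) : Prop :=
  ∀ c : ℂ, MvPolynomial.aeval (fun i : Fin N => X i + MvPolynomial.C c) P = P

/-- Symmetry of a multivariate polynomial. -/
def SymmPoly (N : ℕ) (P : MvPolynomial (Fin N) ℂ) : Prop :=
  ∀ σ : Equiv.Perm (Fin N), rename ⇑σ P = P

variable {N a : ℕ}

lemma aeval_eq_eval' {σ : Type*} (x : σ → ℂ) (p : MvPolynomial σ ℂ) : aeval x p = eval x p := by
  rw [← coe_aeval_eq_eval]; rfl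

lemma eval_aeval' {σ τ : Type*} (g : σ → MvPolynomial τ ℂ) (x : τ → ℂ) (Q : MvPolynomial σ ℂ) :
    eval x (aeval g Q) = eval (fun i => eval x (g i)) Q := by
  have h1 : eval x (aeval g Q) = aeval x (aeval g Q) := (aeval_eq_eval' ..).symm
  rw [h1, ← AlgHom.comp_apply, comp_aeval]
  have hf : (fun i => (aeval x) (g i)) = fun i => eval x (g i) := funext fun i => aeval_eq_eval' _ _
  rw [hf, aeval_eq_eval']

lemma card_filter_lt (ha : a ≤ N) :
    (Finset.univ.filter (fun i : Fin N => i.val < a)).card = a := by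
  rcases eq_or_lt_of_le ha with rfl | h
  · simp [Finset.filter_true_of_mem (fun (i : Fin _) _ => i.isLt)]
  · have : Finset.univ.filter (fun i : Fin N => i.val < a) = Finset.Iio ⟨a, h⟩ := by
      ext i; simp [Fin.lt_def]
    rw [this, Fin.card_Iio]

def wdeg (a : ℕ) (m : Fin N →₀ ℕ) : ℕ :=
  ∑ i ∈ Finset.univ.filter (fun i : Fin N => i.val < a), m i

lemma wdeg_eq (m : Fin N →₀ ℕ) :
    wdeg a m = ∑ i ∈ m.support.filter (fun i => i.val < a), m i := by
  rw [wdeg]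
  refine (Finset.sum_subset (Finset.filter_subset_filter _ (Finset.subset_univ _)) ?_).symm
  intro i hi hi2
  by_contra h
  exact hi2 (Finset.mem_filter.mpr ⟨Finsupp.mem_support_iff.mpr h, (Finset.mem_filter.mp hi).2⟩)

def beta (N a : ℕ) : MvPolynomial (Fin N) ℂ →ₐ[ℂ] Polynomial (MvPolynomial (Fin N) ℂ) :=
  aeval (fun i => if i.val < a then Polynomial.X * Polynomial.C (X i) else Polynomial.C (X i))

def tauM (N a : ℕ) (c : ℂ) : MvPolynomial (Fin N) ℂ →ₐ[ℂ] MvPolynomial (Fin N) ℂ :=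
  aeval (fun i => if i.val < a then X i + C c else X i)

def gammaM (N a : ℕ) (c : ℂ) : MvPolynomial (Fin N) ℂ →ₐ[ℂ] Polynomial (MvPolynomial (Fin N) ℂ) :=
  aeval (fun i => if i.val < a then Polynomial.X * Polynomial.C (X i + C c)
    else Polynomial.C (X i) + Polynomial.X * Polynomial.C (C c))

def hmap (N a : ℕ) : MvPolynomial (Fin N) ℂ →ₐ[ℂ] MvPolynomial (FVars N) ℂ :=
  aeval (fun i => if i.val < a then fuseXi N a i
    else X (Sum.inr (some i)) - X (Sum.inr none))

lemma beta_monomial (m : Fin N →₀ ℕ) (c : ℂ) :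
    beta N a (monomial m c) = Polynomial.monomial (wdeg a m) (monomial m c) := by
  rw [beta, aeval_monomial, Finsupp.prod,
    ← Finset.prod_filter_mul_prod_filter_not m.support (fun i => i.val < a)]
  have h1 : (∏ i ∈ m.support.filter (fun i => i.val < a),
      (if i.val < a then Polynomial.X * Polynomial.C (X i) else Polynomial.C (X i)) ^ m i)
      = Polynomial.X ^ (wdeg a m) *
        Polynomial.C (∏ i ∈ m.support.filter (fun i => i.val < a), (X i : MvPolynomial (Fin N) ℂ) ^ m i) := by
    rw [Finset.prod_congr rfl (fun i hi => by rw [if_pos (Finset.mem_filter.mp hi).2])]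
    simp_rw [mul_pow, ← Polynomial.C_pow]
    rw [Finset.prod_mul_distrib, Finset.prod_pow_eq_pow_sum, ← map_prod, wdeg_eq]
  have h2 : (∏ i ∈ m.support.filter (fun i => ¬ i.val < a),
      (if i.val < a then Polynomial.X * Polynomial.C (X i) else Polynomial.C (X i)) ^ m i)
      = Polynomial.C (∏ i ∈ m.support.filter (fun i => ¬ i.val < a), (X i : MvPolynomial (Fin N) ℂ) ^ m i) := by
    rw [Finset.prod_congr rfl (fun i hi => by rw [if_neg (Finset.mem_filter.mp hi).2])]
    simp_rw [← Polynomial.C_pow]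
    rw [← map_prod]
  rw [h1, h2]
  have h3 : (monomial m c : MvPolynomial (Fin N) ℂ) = C c *
      ((∏ i ∈ m.support.filter (fun i => i.val < a), (X i : MvPolynomial (Fin N) ℂ) ^ m i) *
       (∏ i ∈ m.support.filter (fun i => ¬ i.val < a), (X i : MvPolynomial (Fin N) ℂ) ^ m i)) := by
    rw [monomial_eq, Finsupp.prod,
      ← Finset.prod_filter_mul_prod_filter_not m.support (fun i => i.val < a)]
  rw [h3]
  have h4 : algebraMap ℂ (Polynomial (MvPolynomial (Fin N) ℂ)) c = Polynomial.C (C c) := by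
    simp [Polynomial.algebraMap_apply, MvPolynomial.algebraMap_eq]
  rw [h4, ← Polynomial.C_mul_X_pow_eq_monomial]
  push_cast [map_mul]
  ring

lemma tau_monomial (c : ℂ) (m : Fin N →₀ ℕ) (c' : ℂ) :
    tauM N a c (monomial m c') =
      C c' * ((∏ i ∈ m.support.filter (fun i => i.val < a), ((X i : MvPolynomial (Fin N) ℂ) + C c) ^ m i) *
        (∏ i ∈ m.support.filter (fun i => ¬ i.val < a), (X i : MvPolynomial (Fin N) ℂ) ^ m i)) := by
  rw [tauM, aeval_monomial, Finsupp.prod,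
    ← Finset.prod_filter_mul_prod_filter_not m.support (fun i => i.val < a)]
  have e1 : (∏ i ∈ m.support.filter (fun i => i.val < a),
      (if i.val < a then (X i : MvPolynomial (Fin N) ℂ) + C c else X i) ^ m i)
      = ∏ i ∈ m.support.filter (fun i => i.val < a), ((X i : MvPolynomial (Fin N) ℂ) + C c) ^ m i :=
    Finset.prod_congr rfl (fun i hi => by rw [if_pos (Finset.mem_filter.mp hi).2])
  have e2 : (∏ i ∈ m.support.filter (fun i => ¬ i.val < a),
      (if i.val < a then (X i : MvPolynomial (Fin N) ℂ) + C c else X i) ^ m i)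
      = ∏ i ∈ m.support.filter (fun i => ¬ i.val < a), (X i : MvPolynomial (Fin N) ℂ) ^ m i :=
    Finset.prod_congr rfl (fun i hi => by rw [if_neg (Finset.mem_filter.mp hi).2])
  rw [e1, e2, MvPolynomial.algebraMap_eq]

lemma gamma_monomial (c : ℂ) (m : Fin N →₀ ℕ) (c' : ℂ) :
    gammaM N a c (monomial m c') =
      (Polynomial.C (C c') *
        (Polynomial.C (∏ i ∈ m.support.filter (fun i => i.val < a), ((X i : MvPolynomial (Fin N) ℂ) + C c) ^ m i) *
         ∏ i ∈ m.support.filter (fun i => ¬ i.val < a),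
           (Polynomial.C (X i : MvPolynomial (Fin N) ℂ) + Polynomial.X * Polynomial.C (C c)) ^ m i))
      * Polynomial.X ^ (wdeg a m) := by
  rw [gammaM, aeval_monomial, Finsupp.prod,
    ← Finset.prod_filter_mul_prod_filter_not m.support (fun i => i.val < a)]
  have h1 : (∏ i ∈ m.support.filter (fun i => i.val < a),
      (if i.val < a then Polynomial.X * Polynomial.C (X i + C c)
        else Polynomial.C (X i) + Polynomial.X * Polynomial.C (C c)) ^ m i)
      = Polynomial.X ^ (wdeg a m) *
        Polynomial.C (∏ i ∈ m.support.filter (fun i => i.val < a), ((X i : MvPolynomial (Fin N) ℂ) + C c) ^ m i) := by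
    rw [Finset.prod_congr rfl (fun i hi => by rw [if_pos (Finset.mem_filter.mp hi).2])]
    simp_rw [mul_pow, ← Polynomial.C_pow]
    rw [Finset.prod_mul_distrib, Finset.prod_pow_eq_pow_sum, ← map_prod, wdeg_eq]
  have h2 : (∏ i ∈ m.support.filter (fun i => ¬ i.val < a),
      (if i.val < a then Polynomial.X * Polynomial.C (X i + C c)
        else Polynomial.C (X i) + Polynomial.X * Polynomial.C (C c)) ^ m i)
      = ∏ i ∈ m.support.filter (fun i => ¬ i.val < a),
          (Polynomial.C (X i : MvPolynomial (Fin N) ℂ) + Polynomial.X * Polynomial.C (C c)) ^ m i :=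
    Finset.prod_congr rfl (fun i hi => by rw [if_neg (Finset.mem_filter.mp hi).2])
  rw [h1, h2]
  have h4 : algebraMap ℂ (Polynomial (MvPolynomial (Fin N) ℂ)) c' = Polynomial.C (C c') := by
    simp [Polynomial.algebraMap_apply, MvPolynomial.algebraMap_eq]
  rw [h4]
  ring

lemma gamma_coeff_mono (c : ℂ) (S : ℕ) (m : Fin N →₀ ℕ) (c' : ℂ) (hS : S ≤ wdeg a m) :
    (gammaM N a c (monomial m c')).coeff S = tauM N a c ((beta N a (monomial m c')).coeff S) := by
  rw [beta_monomial, gamma_monomial, Polynomial.coeff_mul_X_pow', Polynomial.coeff_monomial]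
  rcases eq_or_lt_of_le hS with heq | hlt
  · rw [if_pos (le_of_eq heq.symm), if_pos heq.symm, ← heq, Nat.sub_self]
    rw [tau_monomial]
    simp only [Polynomial.coeff_zero_eq_eval_zero, Polynomial.eval_mul, Polynomial.eval_C,
      Polynomial.eval_prod, Polynomial.eval_pow, Polynomial.eval_add, Polynomial.eval_X,
      zero_mul, add_zero]
  · rw [if_neg (by omega), if_neg (by omega), map_zero]

lemma gamma_coeff (c : ℂ) (S : ℕ) (Q : MvPolynomial (Fin N) ℂ)
    (hQ : ∀ m ∈ Q.support, S ≤ wdeg a m) :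
    (gammaM N a c Q).coeff S = tauM N a c ((beta N a Q).coeff S) := by
  conv_lhs => rw [as_sum Q]
  conv_rhs => rw [as_sum Q]
  rw [map_sum, map_sum, Polynomial.finset_sum_coeff, Polynomial.finset_sum_coeff, map_sum]
  exact Finset.sum_congr rfl fun m hm => gamma_coeff_mono c S m _ (hQ m hm)


lemma ti_ext {P : MvPolynomial (Fin N) ℂ} (hTI : TransInv N P)
    {A : Type*} [CommRing A] [Algebra ℂ A] (v : Fin N → A) (t : A) :
    aeval (fun i => v i + t) P = aeval v P := by
  have key : aeval (fun i : Fin N => (X (some i) + X none : MvPolynomial (Option (Fin N)) ℂ)) P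
      = rename some P := by
    apply MvPolynomial.funext
    intro x
    rw [eval_rename, ← aeval_eq_eval', ← aeval_eq_eval', ← AlgHom.comp_apply, comp_aeval]
    simp only [map_add, aeval_X]
    have h2 := congrArg (aeval (x ∘ some) : MvPolynomial (Fin N) ℂ →ₐ[ℂ] ℂ) (hTI (x none))
    rw [← AlgHom.comp_apply, comp_aeval] at h2
    simpa using h2
  have h3 := congrArg (aeval (fun o => Option.elim o t v) : MvPolynomial (Option (Fin N)) ℂ →ₐ[ℂ] A) key
  rw [aeval_rename, ← AlgHom.comp_apply, comp_aeval] at h3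
  simpa [Function.comp_def] using h3

lemma gamma_eq_beta (P : MvPolynomial (Fin N) ℂ) (hTI : TransInv N P) (c : ℂ) :
    gammaM N a c P = beta N a P := by
  have h := ti_ext hTI (A := Polynomial (MvPolynomial (Fin N) ℂ))
    (fun i : Fin N => if i.val < a then Polynomial.X * Polynomial.C (X i) else Polynomial.C (X i))
    (Polynomial.X * Polynomial.C (C c))
  have hg : (fun i : Fin N =>
      (if i.val < a then Polynomial.X * Polynomial.C (X i)
        else Polynomial.C ((X i : MvPolynomial (Fin N) ℂ))) + Polynomial.X * Polynomial.C (C c))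
      = (fun i : Fin N => if i.val < a then Polynomial.X * Polynomial.C (X i + C c)
          else Polynomial.C (X i) + Polynomial.X * Polynomial.C (C c)) := by
    funext i
    by_cases hi : i.val < a <;> simp [hi] <;> ring
  rw [gammaM, ← hg]
  exact h

lemma PK_inv (P : MvPolynomial (Fin N) ℂ) (hTI : TransInv N P) (S : ℕ)
    (hQ : ∀ m ∈ P.support, S ≤ wdeg a m) (c : ℂ) :
    tauM N a c ((beta N a P).coeff S) = (beta N a P).coeff S := by
  rw [← gamma_coeff c S P hQ, gamma_eq_beta P hTI c]

lemma fuse_coeff (P : MvPolynomial (Fin N) ℂ) (hTI : TransInv N P) (k : ℕ) :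
    (fuse N a P).coeff k = hmap N a ((beta N a P).coeff k) := by
  have h1 : (Polynomial.mapAlgHom (hmap N a)).comp (beta N a) =
      aeval (fun i : Fin N => if i.val < a then Polynomial.X * Polynomial.C (fuseXi N a i)
        else Polynomial.C (X (Sum.inr (some i)) - X (Sum.inr none))) := by
    apply MvPolynomial.algHom_ext
    intro i
    by_cases hi : i.val < a <;>
      simp [beta, hmap, hi, Polynomial.coe_mapAlgHom]
  have h3 : (fun i : Fin N =>
      (if i.val < a then Polynomial.X * Polynomial.C (fuseXi N a i)
        else Polynomial.C ((X (Sum.inr (some i)) : MvPolynomial (FVars N) ℂ) - X (Sum.inr none)))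
        + Polynomial.C (X (Sum.inr none)))
      = (fun i : Fin N => if i.val < a
          then Polynomial.C (X (Sum.inr none)) + Polynomial.X * Polynomial.C (fuseXi N a i)
          else Polynomial.C (X (Sum.inr (some i)))) := by
    funext i
    by_cases hi : i.val < a
    · simp [hi]; ring
    · simp [hi, ← map_add]
  have h2 := ti_ext hTI (A := Polynomial (MvPolynomial (FVars N) ℂ))
    (fun i : Fin N => if i.val < a then Polynomial.X * Polynomial.C (fuseXi N a i)
      else Polynomial.C (X (Sum.inr (some i)) - X (Sum.inr none)))
    (Polynomial.C (X (Sum.inr none)))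
  rw [h3] at h2
  have h4 : fuse N a P = (Polynomial.mapAlgHom (hmap N a)) (beta N a P) := by
    rw [← AlgHom.comp_apply, h1, ← h2]
    rfl
  rw [h4, Polynomial.coe_mapAlgHom, Polynomial.coeff_map]
  rfl

lemma beta_coeff_eq_zero (P : MvPolynomial (Fin N) ℂ) (k : ℕ)
    (hk : ∀ m ∈ P.support, wdeg a m ≠ k) : (beta N a P).coeff k = 0 := by
  conv_lhs => rw [as_sum P]
  rw [map_sum, Polynomial.finset_sum_coeff]
  refine Finset.sum_eq_zero fun m hm => ?_
  rw [beta_monomial, Polynomial.coeff_monomial, if_neg (hk m hm)]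

lemma beta_coeff_coeff (P : MvPolynomial (Fin N) ℂ) (m0 : Fin N →₀ ℕ) (hm0 : m0 ∈ P.support) :
    MvPolynomial.coeff m0 ((beta N a P).coeff (wdeg a m0)) = P.coeff m0 := by
  conv_lhs => rw [as_sum P]
  rw [map_sum, Polynomial.finset_sum_coeff, MvPolynomial.coeff_sum]
  rw [Finset.sum_eq_single_of_mem m0 hm0 ?_]
  · rw [beta_monomial, Polynomial.coeff_monomial, if_pos rfl, MvPolynomial.coeff_monomial,
      if_pos rfl]
  · intro m hm hne
    rw [beta_monomial, Polynomial.coeff_monomial]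
    split
    · rw [MvPolynomial.coeff_monomial, if_neg hne]
    · exact MvPolynomial.coeff_zero m0

lemma key_nonzero (ha : a ≤ N) (P : MvPolynomial (Fin N) ℂ) (hTI : TransInv N P)
    (S : ℕ) (hmin : ∀ m ∈ P.support, S ≤ wdeg a m)
    (hne : (beta N a P).coeff S ≠ 0) :
    hmap N a ((beta N a P).coeff S) ≠ 0 := by
  intro h0
  apply hne
  set Q := (beta N a P).coeff S with hQdef
  have hvanish : ∀ y : Fin N → ℂ, eval y Q = 0 := by
    intro y
    set s : ℂ := ∑ i ∈ Finset.univ.filter (fun i : Fin N => i.val < a), y i with hs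
    set c : ℂ := -s / a with hc
    set y' : Fin N → ℂ := fun i => if i.val < a then y i + c else y i with hy'
    have hsum : ∑ i ∈ Finset.univ.filter (fun i : Fin N => i.val < a), y' i = 0 := by
      rcases Nat.eq_zero_or_pos a with rfl | hapos
      · simp
      · have he : ∀ i ∈ Finset.univ.filter (fun i : Fin N => i.val < a), y' i = y i + c :=
          fun i hi => by simp [hy', (Finset.mem_filter.mp hi).2]
        rw [Finset.sum_congr rfl he, Finset.sum_add_distrib, Finset.sum_const,
          card_filter_lt ha, nsmul_eq_mul, ← hs, hc]
        have haC : (a : ℂ) ≠ 0 := Nat.cast_ne_zero.mpr hapos.ne'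
        field_simp
        ring
    have step1 : eval y Q = eval y' Q := by
      have hin := PK_inv P hTI S hmin c
      rw [← hQdef] at hin
      calc eval y Q = eval y (tauM N a c Q) := by rw [hin]
        _ = eval y' Q := by
            simp only [tauM]
            rw [eval_aeval']
            have hfun : (fun i : Fin N =>
                eval y (if i.val < a then (X i : MvPolynomial (Fin N) ℂ) + C c else X i)) = y' := by
              funext i
              by_cases hi : i.val < a <;> simp [hi, hy']
            rw [hfun]
    set x : FVars N → ℂ := Sum.elim y' (fun o => Option.elim o 0 y') with hx
    have step2 : eval y' Q = eval x (hmap N a Q) := by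
      simp only [hmap]
      rw [eval_aeval']
      have hfun : (fun i : Fin N =>
          eval x (if i.val < a then fuseXi N a i
            else X (Sum.inr (some i)) - X (Sum.inr none))) = y' := by
        funext i
        by_cases hi : i.val < a
        · rw [if_pos hi, fuseXi]
          by_cases hi2 : i.val + 1 < a
          · simp [hi2, hx]
          · rw [if_neg hi2]
            have hins : Finset.univ.filter (fun j : Fin N => j.val < a)
                = insert i (Finset.univ.filter (fun j : Fin N => j.val + 1 < a)) := by
              ext j
              simp only [Finset.mem_filter, Finset.mem_univ, true_and, Finset.mem_insert,
                Fin.ext_iff]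
              omega
            rw [hins, Finset.sum_insert (by simp [hi2])] at hsum
            simp only [map_neg, map_sum, eval_X, hx, Sum.elim_inl]
            linear_combination -hsum
        · simp [hi, hx]
      rw [hfun]
    rw [step1, step2, h0, map_zero]
  exact MvPolynomial.funext (fun y => by rw [hvanish y, map_zero])

/-- for a translation invariant polynomial, the lowest power of `λ`
in the fusion expansion equals `S_a`. -/
theorem stmt5 (N a : ℕ) (ha : a ≤ N) (P : MvPolynomial (Fin N) ℂ)
    (hP : P ≠ 0) (hTI : TransInv N P) :
    fuse N a P ≠ 0 ∧ (fuse N a P).natTrailingDegree = minDeg N P a := by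
  have hsupp : P.support.Nonempty :=
    Finset.nonempty_iff_ne_empty.mpr (fun h => hP (MvPolynomial.support_eq_empty.mp h))
  obtain ⟨m1, hm1⟩ := hsupp
  have hSmem : minDeg N P a ∈
      {d | ∃ mo ∈ P.support, d = ∑ i ∈ Finset.univ.filter (fun i : Fin N => i.val < a), mo i} :=
    Nat.sInf_mem ⟨wdeg a m1, m1, hm1, rfl⟩
  obtain ⟨m0, hm0, hSw⟩ := hSmem
  have hSw' : minDeg N P a = wdeg a m0 := hSw
  have hmin : ∀ m ∈ P.support, minDeg N P a ≤ wdeg a m :=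
    fun m hm => Nat.sInf_le ⟨m, hm, rfl⟩
  have hbne : (beta N a P).coeff (minDeg N P a) ≠ 0 := by
    intro h
    have hcc := beta_coeff_coeff (a := a) P m0 hm0
    rw [← hSw', h] at hcc
    exact MvPolynomial.mem_support_iff.mp hm0 (by simpa using hcc.symm)
  have hcoeffS : (fuse N a P).coeff (minDeg N P a) ≠ 0 := by
    rw [fuse_coeff P hTI]
    exact key_nonzero ha P hTI _ hmin hbne
  have hlt : ∀ k < minDeg N P a, (fuse N a P).coeff k = 0 := by
    intro k hk
    rw [fuse_coeff P hTI k,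
      beta_coeff_eq_zero P k (fun m hm => by have := hmin m hm; omega), map_zero]
  have hfne : fuse N a P ≠ 0 := fun h => hcoeffS (by rw [h, Polynomial.coeff_zero])
  exact ⟨hfne, le_antisymm (Polynomial.natTrailingDegree_le_of_ne_zero hcoeffS)
    (Polynomial.le_natTrailingDegree hfne hlt)⟩
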